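/- Let α, β, γ, c₁, c₂, c₃ be positive real constants with α ≥ min(β, γ) and β < γ. Then there exists a constant c₄ > 0 such that for every TOL ∈ (0, e⁻¹) there exist a level L ∈ ℕ and positive integers M₀, M₁, …, M_L satisfying both c₁²·2^(−2αL) + Σ_{ℓ=0}^{L} c₂·2^(−βℓ)/M_ℓ ≤ TOL² and Σ_{ℓ=0}^{L} M_ℓ·c₃·2^(γℓ) ≤ c₄·TOL^(−2−(γ−β)/α). -/

import Mathlib

open Filter Finset

lemma mlmc_geom_sum_le_inv (r : ℝ) (h0 : 0 ≤ r) (h1 : r < 1) (n : ℕ) :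
    ∑ ℓ ∈ Finset.range n, r ^ ℓ ≤ (1 - r)⁻¹ := by
  have hr : (0:ℝ) < 1 - r := by linarith
  rw [geom_sum_eq (by linarith : r ≠ 1)]
  have h2 : (r ^ n - 1) / (r - 1) = (1 - r ^ n) / (1 - r) := by
    rw [div_eq_div_iff (sub_ne_zero.mpr h1.ne) hr.ne']; ring
  rw [h2, inv_eq_one_div]
  gcongr
  have : 0 ≤ r ^ n := pow_nonneg h0 n
  linarith

lemma mlmc_sum_rpow_le (c : ℝ) (hc : 0 < c) (L : ℕ) :
    ∑ ℓ ∈ Finset.range (L+1), (2:ℝ) ^ (c * (ℓ:ℝ)) ≤ (2:ℝ)^(c*(L:ℝ)) * (1 - (2:ℝ)^(-c))⁻¹ := by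
  have h0 : (0:ℝ) ≤ (2:ℝ)^(-c) := Real.rpow_nonneg (by norm_num) _
  have h1 : (2:ℝ)^(-c) < 1 := Real.rpow_lt_one_of_one_lt_of_neg (by norm_num) (by linarith)
  have key : ∑ ℓ ∈ Finset.range (L+1), (2:ℝ) ^ (c * (ℓ:ℝ))
      = ∑ j ∈ Finset.range (L+1), (2:ℝ)^(c*(L:ℝ)) * ((2:ℝ)^(-c))^j := by
    rw [← Finset.sum_range_reflect (fun ℓ => (2:ℝ) ^ (c * (ℓ:ℝ))) (L+1)]
    refine Finset.sum_congr rfl fun j hj => ?_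
    have hj' : j ≤ L := Nat.lt_succ_iff.mp (Finset.mem_range.mp hj)
    have hcast : ((L + 1 - 1 - j : ℕ) : ℝ) = (L:ℝ) - j := by
      simp only [Nat.add_sub_cancel]
      rw [Nat.cast_sub hj']
    rw [hcast, ← Real.rpow_natCast ((2:ℝ)^(-c)) j, ← Real.rpow_mul (by norm_num),
      ← Real.rpow_add (by norm_num : (0:ℝ) < 2)]
    ring_nf
  rw [key, ← Finset.mul_sum]
  exact mul_le_mul_of_nonneg_left (mlmc_geom_sum_le_inv _ h0 h1 (L+1)) (by positivity)

set_option maxHeartbeats 1000000 in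
/-- MLMC complexity theorem, deterministic core, case `β < γ`. -/
theorem mlmc_complexity_beta_lt_gamma
    (α β γ c₁ c₂ c₃ : ℝ)
    (hα : 0 < α) (hβ : 0 < β) (hγ : 0 < γ)
    (hc₁ : 0 < c₁) (hc₂ : 0 < c₂) (hc₃ : 0 < c₃)
    (hαmin : α ≥ min β γ) (hβγ : β < γ) :
    ∃ c₄ > (0 : ℝ), ∀ TOL : ℝ, 0 < TOL → TOL < Real.exp (-1) →
      ∃ (L : ℕ) (M : ℕ → ℕ),
        (∀ ℓ ≤ L, 0 < M ℓ) ∧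
        c₁ ^ 2 * (2 : ℝ) ^ (-(2 * α * (L : ℝ)))
            + ∑ ℓ ∈ Finset.range (L + 1), c₂ * (2 : ℝ) ^ (-(β * (ℓ : ℝ))) / (M ℓ : ℝ)
          ≤ TOL ^ 2 ∧
        ∑ ℓ ∈ Finset.range (L + 1), (M ℓ : ℝ) * c₃ * (2 : ℝ) ^ (γ * (ℓ : ℝ))
          ≤ c₄ * TOL ^ (-2 - (γ - β) / α) := by
  have hβα : β ≤ α := by
    have := min_le_left β γ
    rw [min_eq_left hβγ.le] at hαmin
    exact hαmin
  set a : ℝ := (γ - β)/2 with ha_def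
  have ha : 0 < a := by rw [ha_def]; linarith
  set S : ℝ := (1 - (2:ℝ)^(-a))⁻¹ with hS_def
  have hS : 0 < S := by
    rw [hS_def]
    have : (2:ℝ)^(-a) < 1 := Real.rpow_lt_one_of_one_lt_of_neg (by norm_num) (by linarith)
    exact inv_pos.mpr (by linarith)
  set Sγ : ℝ := (1 - (2:ℝ)^(-γ))⁻¹ with hSγ_def
  have hSγ : 0 < Sγ := by
    rw [hSγ_def]
    have : (2:ℝ)^(-γ) < 1 := Real.rpow_lt_one_of_one_lt_of_neg (by norm_num) (by linarith)
    exact inv_pos.mpr (by linarith)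
  set K : ℝ := 2 * c₂ * S with hK_def
  have hK : 0 < K := by rw [hK_def]; positivity
  set D : ℝ → ℝ := fun c => max 1 ((2*c₁^2) ^ (c/(2*α)) : ℝ) with hD_def
  have hD1 : ∀ c, 1 ≤ D c := fun c => le_max_left _ _
  have hDpos : ∀ c, 0 < D c := fun c => lt_of_lt_of_le one_pos (hD1 c)
  refine ⟨c₃*K*S*((2:ℝ)^(γ-β) * D (γ-β)) + c₃*Sγ*((2:ℝ)^γ * D γ), by positivity,
    fun TOL hT0 hTe => ?_⟩
  have hT1 : TOL < 1 := hTe.trans (by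
    rw [Real.exp_lt_one_iff]; norm_num)
  -- define L
  set x : ℝ := Real.logb 2 (2*c₁^2/TOL^2) / (2*α) with hx_def
  set L : ℕ := ⌈max 0 x⌉₊ with hL_def
  set M : ℕ → ℕ := fun ℓ => ⌈K * (2:ℝ)^(a*(L:ℝ) - (a+β)*(ℓ:ℝ)) / TOL^2⌉₊ with hM_def
  have hq : ∀ ℓ : ℕ, 0 < K * (2:ℝ)^(a*(L:ℝ) - (a+β)*(ℓ:ℝ)) / TOL^2 := by
    intro ℓ; positivity
  have hMpos : ∀ ℓ : ℕ, 0 < M ℓ := fun ℓ => Nat.ceil_pos.mpr (hq ℓ)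
  have hMlb : ∀ ℓ : ℕ, K * (2:ℝ)^(a*(L:ℝ) - (a+β)*(ℓ:ℝ)) / TOL^2 ≤ (M ℓ : ℝ) :=
    fun ℓ => Nat.le_ceil _
  have hMub : ∀ ℓ : ℕ, (M ℓ : ℝ) ≤ K * (2:ℝ)^(a*(L:ℝ) - (a+β)*(ℓ:ℝ)) / TOL^2 + 1 :=
    fun ℓ => (Nat.ceil_lt_add_one (hq ℓ).le).le
  -- bias bound
  have hy : 0 < 2*c₁^2/TOL^2 := by positivity
  have hLx : x ≤ (L:ℝ) := (le_max_right 0 x).trans (Nat.le_ceil _)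
  have hbias : c₁^2 * (2:ℝ)^(-(2*α*(L:ℝ))) ≤ TOL^2/2 := by
    have h1 : 2*c₁^2/TOL^2 ≤ (2:ℝ)^(2*α*(L:ℝ)) := by
      have h2 : Real.logb 2 (2*c₁^2/TOL^2) ≤ 2*α*(L:ℝ) := by
        rw [hx_def] at hLx
        rw [div_le_iff₀ (by linarith : (0:ℝ) < 2*α)] at hLx
        linarith
      calc 2*c₁^2/TOL^2 = (2:ℝ)^(Real.logb 2 (2*c₁^2/TOL^2)) :=
            (Real.rpow_logb (by norm_num) (by norm_num) hy).symm
        _ ≤ (2:ℝ)^(2*α*(L:ℝ)) := Real.rpow_le_rpow_of_exponent_le one_le_two h2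
    have h3 : (2:ℝ)^(-(2*α*(L:ℝ))) ≤ TOL^2/(2*c₁^2) := by
      rw [Real.rpow_neg (by norm_num : (0:ℝ) ≤ 2), ← inv_div]
      exact inv_anti₀ hy h1
    calc c₁^2 * (2:ℝ)^(-(2*α*(L:ℝ))) ≤ c₁^2 * (TOL^2/(2*c₁^2)) := by
          exact mul_le_mul_of_nonneg_left h3 (by positivity)
      _ = TOL^2/2 := by field_simp
  -- variance bound
  have hvar : ∑ ℓ ∈ Finset.range (L+1), c₂ * (2:ℝ)^(-(β*(ℓ:ℝ))) / (M ℓ : ℝ) ≤ TOL^2/2 := by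
    have hterm : ∀ ℓ ∈ Finset.range (L+1),
        c₂ * (2:ℝ)^(-(β*(ℓ:ℝ))) / (M ℓ : ℝ)
          ≤ (TOL^2/(2*S)) * ((2:ℝ)^(-(a*(L:ℝ))) * (2:ℝ)^(a*(ℓ:ℝ))) := by
      intro ℓ _
      have hm := hq ℓ
      have h1 : c₂ * (2:ℝ)^(-(β*(ℓ:ℝ))) / (M ℓ : ℝ)
          ≤ c₂ * (2:ℝ)^(-(β*(ℓ:ℝ))) / (K * (2:ℝ)^(a*(L:ℝ) - (a+β)*(ℓ:ℝ)) / TOL^2) :=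
        div_le_div_of_nonneg_left (by positivity) hm (hMlb ℓ)
      refine h1.trans_eq ?_
      have hXYZ : (2:ℝ)^(-(β*(ℓ:ℝ)))
          = (2:ℝ)^(a*(L:ℝ) - (a+β)*(ℓ:ℝ)) * ((2:ℝ)^(-(a*(L:ℝ))) * (2:ℝ)^(a*(ℓ:ℝ))) := by
        rw [← Real.rpow_add (by norm_num : (0:ℝ) < 2),
          ← Real.rpow_add (by norm_num : (0:ℝ) < 2)]
        ring_nf
      have hY : (2:ℝ)^(a*(L:ℝ) - (a+β)*(ℓ:ℝ)) ≠ 0 := by positivity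
      rw [hXYZ, hK_def]
      field_simp
    calc ∑ ℓ ∈ Finset.range (L+1), c₂ * (2:ℝ)^(-(β*(ℓ:ℝ))) / (M ℓ : ℝ)
        ≤ ∑ ℓ ∈ Finset.range (L+1),
            (TOL^2/(2*S)) * ((2:ℝ)^(-(a*(L:ℝ))) * (2:ℝ)^(a*(ℓ:ℝ))) :=
          Finset.sum_le_sum hterm
      _ = (TOL^2/(2*S)) * ((2:ℝ)^(-(a*(L:ℝ)))
            * ∑ ℓ ∈ Finset.range (L+1), (2:ℝ)^(a*(ℓ:ℝ))) := by
          rw [← Finset.mul_sum, ← Finset.mul_sum]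
      _ ≤ (TOL^2/(2*S)) * ((2:ℝ)^(-(a*(L:ℝ))) * ((2:ℝ)^(a*(L:ℝ)) * S)) := by
          gcongr
          exact (mlmc_sum_rpow_le a ha L).trans_eq (by rw [hS_def])
      _ = TOL^2/2 := by
          rw [← mul_assoc ((2:ℝ)^(-(a*(L:ℝ)))), ← Real.rpow_add (by norm_num : (0:ℝ) < 2)]
          simp only [neg_add_cancel, Real.rpow_zero, one_mul]
          field_simp
  -- growth bound for 2^(c*L)
  have hpow : ∀ c : ℝ, 0 < c → (2:ℝ)^(c*(L:ℝ)) ≤ (2:ℝ)^c * D c * TOL^(-(c/α)) := by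
    intro c hc
    have hca : 0 ≤ c/α := by positivity
    have hTpow1 : (1:ℝ) ≤ TOL^(-(c/α)) :=
      Real.one_le_rpow_of_pos_of_le_one_of_nonpos hT0 hT1.le (by linarith)
    have hLlt : (L:ℝ) < max 0 x + 1 := by
      rw [hL_def]; exact Nat.ceil_lt_add_one (le_max_left 0 x)
    have h1 : (2:ℝ)^(c*(L:ℝ)) ≤ (2:ℝ)^c * (2:ℝ)^(c * max 0 x) := by
      rw [← Real.rpow_add (by norm_num : (0:ℝ) < 2)]
      apply Real.rpow_le_rpow_of_exponent_le one_le_two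
      nlinarith [mul_le_mul_of_nonneg_left hLlt.le hc.le]
    have h2 : (2:ℝ)^(c * max 0 x) ≤ D c * TOL^(-(c/α)) := by
      by_cases hcase : 2*c₁^2/TOL^2 ≤ 1
      · have hxle : x ≤ 0 := by
          rw [hx_def]
          apply div_nonpos_of_nonpos_of_nonneg _ (by linarith)
          exact Real.logb_nonpos (by norm_num) hy.le hcase
        rw [max_eq_left hxle, mul_zero, Real.rpow_zero]
        calc (1:ℝ) = 1 * 1 := by norm_num
          _ ≤ D c * TOL^(-(c/α)) := mul_le_mul (hD1 c) hTpow1 zero_le_one (hDpos c).le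
      · push_neg at hcase
        have hx0 : 0 ≤ x := by
          rw [hx_def]
          apply div_nonneg _ (by linarith)
          exact Real.logb_nonneg (by norm_num) hcase.le
        rw [max_eq_right hx0]
        have e1 : (2:ℝ)^(c*x) = ((2:ℝ)^(2*α*x))^(c/(2*α)) := by
          rw [← Real.rpow_mul (by norm_num : (0:ℝ) ≤ 2)]
          congr 1
          field_simp
        have e2 : (2:ℝ)^(2*α*x) = 2*c₁^2/TOL^2 := by
          rw [hx_def]
          have h5 : 2*α*(Real.logb 2 (2*c₁^2/TOL^2)/(2*α)) = Real.logb 2 (2*c₁^2/TOL^2) := by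
            field_simp
          rw [h5, Real.rpow_logb (by norm_num) (by norm_num) hy]
        have e3 : (2*c₁^2/TOL^2 : ℝ)^(c/(2*α)) = (2*c₁^2 : ℝ)^(c/(2*α)) * TOL^(-(c/α)) := by
          rw [Real.div_rpow (by positivity) (by positivity),
            ← Real.rpow_natCast TOL 2, ← Real.rpow_mul hT0.le,
            div_eq_mul_inv, ← Real.rpow_neg hT0.le]
          congr 2
          push_cast
          field_simp
        rw [e1, e2, e3]
        exact mul_le_mul_of_nonneg_right (le_max_right _ _) (Real.rpow_nonneg hT0.le _)
    calc (2:ℝ)^(c*(L:ℝ)) ≤ (2:ℝ)^c * (2:ℝ)^(c * max 0 x) := h1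
      _ ≤ (2:ℝ)^c * (D c * TOL^(-(c/α))) :=
          mul_le_mul_of_nonneg_left h2 (by positivity)
      _ = (2:ℝ)^c * D c * TOL^(-(c/α)) := by ring
  -- cost bound
  have hcost : ∑ ℓ ∈ Finset.range (L+1), (M ℓ : ℝ) * c₃ * (2:ℝ)^(γ*(ℓ:ℝ))
      ≤ (c₃*K*S*((2:ℝ)^(γ-β) * D (γ-β)) + c₃*Sγ*((2:ℝ)^γ * D γ)) * TOL^(-2-(γ-β)/α) := by
    have hterm : ∀ ℓ ∈ Finset.range (L+1),
        (M ℓ : ℝ) * c₃ * (2:ℝ)^(γ*(ℓ:ℝ))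
          ≤ (c₃*K/TOL^2 * (2:ℝ)^(a*(L:ℝ))) * (2:ℝ)^(a*(ℓ:ℝ)) + c₃ * (2:ℝ)^(γ*(ℓ:ℝ)) := by
      intro ℓ _
      have h1 : (M ℓ : ℝ) * c₃ * (2:ℝ)^(γ*(ℓ:ℝ))
          ≤ (K * (2:ℝ)^(a*(L:ℝ) - (a+β)*(ℓ:ℝ)) / TOL^2 + 1) * c₃ * (2:ℝ)^(γ*(ℓ:ℝ)) := by
        have := hMub ℓ
        gcongr
      refine h1.trans_eq ?_
      have hYV : (2:ℝ)^(a*(L:ℝ) - (a+β)*(ℓ:ℝ)) * (2:ℝ)^(γ*(ℓ:ℝ))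
          = (2:ℝ)^(a*(L:ℝ)) * (2:ℝ)^(a*(ℓ:ℝ)) := by
        rw [← Real.rpow_add (by norm_num : (0:ℝ) < 2),
          ← Real.rpow_add (by norm_num : (0:ℝ) < 2)]
        congr 1
        ring
      have hT2 : (TOL:ℝ)^2 ≠ 0 := by positivity
      linear_combination (c₃ * K / TOL^2) * hYV
    have h2a : (2:ℝ)^(a*(L:ℝ)) * (2:ℝ)^(a*(L:ℝ)) = (2:ℝ)^((γ-β)*(L:ℝ)) := by
      rw [← Real.rpow_add (by norm_num : (0:ℝ) < 2)]
      congr 1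
      rw [ha_def]
      ring
    have hTsplit : TOL ^ (-2-(γ-β)/α) = (TOL^2)⁻¹ * TOL^(-((γ-β)/α)) := by
      rw [show (-2-(γ-β)/α : ℝ) = (-(2:ℝ)) + (-((γ-β)/α)) by ring,
        Real.rpow_add hT0, Real.rpow_neg hT0.le, ← Real.rpow_natCast TOL 2]
      norm_num
    have hab : 0 < γ - β := by linarith
    calc ∑ ℓ ∈ Finset.range (L+1), (M ℓ : ℝ) * c₃ * (2:ℝ)^(γ*(ℓ:ℝ))
        ≤ ∑ ℓ ∈ Finset.range (L+1),
            ((c₃*K/TOL^2 * (2:ℝ)^(a*(L:ℝ))) * (2:ℝ)^(a*(ℓ:ℝ)) + c₃ * (2:ℝ)^(γ*(ℓ:ℝ))) :=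
          Finset.sum_le_sum hterm
      _ = (c₃*K/TOL^2 * (2:ℝ)^(a*(L:ℝ))) * (∑ ℓ ∈ Finset.range (L+1), (2:ℝ)^(a*(ℓ:ℝ)))
            + c₃ * (∑ ℓ ∈ Finset.range (L+1), (2:ℝ)^(γ*(ℓ:ℝ))) := by
          rw [Finset.sum_add_distrib, ← Finset.mul_sum, ← Finset.mul_sum]
      _ ≤ (c₃*K/TOL^2 * (2:ℝ)^(a*(L:ℝ))) * ((2:ℝ)^(a*(L:ℝ)) * S)
            + c₃ * ((2:ℝ)^(γ*(L:ℝ)) * Sγ) := by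
          gcongr
          · exact (mlmc_sum_rpow_le a ha L).trans_eq (by rw [hS_def])
          · exact (mlmc_sum_rpow_le γ hγ L).trans_eq (by rw [hSγ_def])
      _ = (c₃*K*S/TOL^2) * (2:ℝ)^((γ-β)*(L:ℝ)) + c₃*Sγ * (2:ℝ)^(γ*(L:ℝ)) := by
          rw [← h2a]
          ring
      _ ≤ (c₃*K*S/TOL^2) * ((2:ℝ)^(γ-β) * D (γ-β) * TOL^(-((γ-β)/α)))
            + c₃*Sγ * ((2:ℝ)^γ * D γ * TOL^(-(γ/α))) := by
          gcongr
          · exact hpow (γ-β) hab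
          · exact hpow γ hγ
      _ ≤ (c₃*K*S/TOL^2) * ((2:ℝ)^(γ-β) * D (γ-β) * TOL^(-((γ-β)/α)))
            + c₃*Sγ * ((2:ℝ)^γ * D γ * TOL^(-2-(γ-β)/α)) := by
          have hTle : TOL^(-(γ/α)) ≤ TOL^(-2-(γ-β)/α) := by
            apply Real.rpow_le_rpow_of_exponent_ge hT0 hT1.le
            have hdiv : γ/α - (γ-β)/α = β/α := by
              rw [div_sub_div_same]
              congr 1
              ring
            have hba : β/α ≤ 2 := by
              rw [div_le_iff₀ hα]
              linarith
            linarith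
          exact add_le_add le_rfl (mul_le_mul_of_nonneg_left
            (mul_le_mul_of_nonneg_left hTle (by positivity)) (by positivity))
      _ = (c₃*K*S*((2:ℝ)^(γ-β) * D (γ-β))) * ((TOL^2)⁻¹ * TOL^(-((γ-β)/α)))
            + c₃*Sγ*((2:ℝ)^γ * D γ) * TOL^(-2-(γ-β)/α) := by
          ring
      _ = (c₃*K*S*((2:ℝ)^(γ-β) * D (γ-β)) + c₃*Sγ*((2:ℝ)^γ * D γ)) * TOL^(-2-(γ-β)/α) := by
          rw [← hTsplit]
          ring
  exact ⟨L, M, fun ℓ _ => hMpos ℓ, by linarith, hcost⟩
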